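/- arXiv:0705.4058 — 6 statements merged into one kernel-verified Lean document; each statement's English description precedes it below -/
import Mathlib

section
/- There exists σ > 0 such that π² ( h(x)⁻² − M⁻² ) ≥ σ |x|^m for all x ∈ I; consequently W_ε(x) ≥ σ ε⁻² |x|^m for all ε > 0 and all x ∈ I \ {0}. -/
open MeasureTheory Real Set
set_option maxHeartbeats 1000000

lemma aux_inv_bound (x M : ℝ) (h1 : 0 < x) (h2 : x ≤ M) :
    (M - x) / M ^ 3 ≤ (x ^ 2)⁻¹ - (M ^ 2)⁻¹ := by
  have hM : 0 < M := h1.trans_le h2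
  have key : (x ^ 2)⁻¹ - (M ^ 2)⁻¹ = (M ^ 2 - x ^ 2) / (x ^ 2 * M ^ 2) := by
    field_simp
  rw [key, div_le_div_iff₀ (by positivity) (by positivity)]
  nlinarith [mul_nonneg (sub_nonneg.2 h2) (mul_pos h1 hM).le,
    mul_nonneg (sub_nonneg.2 h2) (mul_pos hM hM).le, sq_nonneg (M - x),
    mul_pos h1 hM, mul_pos (mul_pos h1 h1) hM]

/-- **Estimate (2.3)** (Friedlander–Solomyak). There is `σ > 0` with
`π²(h(x)⁻² − M⁻²) ≥ σ|x|^m` on `I = [-a,b]`; consequently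
`W_ε(x) = (π²/ε²)(h(x)⁻² − M⁻²) + v(x) ≥ σ ε⁻² |x|^m` for all `ε > 0` and
`x ∈ I \ {0}` (using `v ≥ 0`). -/
theorem potential_lower_bound_sigma
    (a b : ℝ) (ha : 0 < a) (hb : 0 < b)
    (h : ℝ → ℝ)
    (hcont : ContinuousOn h (Icc (-a) b))
    (hpos : ∀ x ∈ Icc (-a) b, 0 < h x)
    (hmax : ∀ x ∈ Icc (-a) b, x ≠ 0 → h x < h 0)
    (hC1 : ContDiffOn ℝ 1 h (Icc (-a) b \ {0}))
    (m cp cm K η : ℝ)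
    (hm : 1 ≤ m) (hcp : 0 < cp) (hcm : 0 < cm) (hK : 0 < K) (hη : 0 < η)
    (hexp_pos : ∀ x : ℝ, 0 < x → x ≤ η →
      |h x - (h 0 - cp * x ^ m)| ≤ K * x ^ (m + 1))
    (hexp_neg : ∀ x : ℝ, -η ≤ x → x < 0 →
      |h x - (h 0 - cm * |x| ^ m)| ≤ K * |x| ^ (m + 1)) :
    ∃ σ : ℝ, 0 < σ ∧
      (∀ x ∈ Icc (-a) b, σ * |x| ^ m ≤ π ^ 2 * (((h x) ^ 2)⁻¹ - ((h 0) ^ 2)⁻¹)) ∧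
      (∀ ε : ℝ, 0 < ε → ∀ x ∈ Icc (-a) b \ {(0 : ℝ)},
        σ / ε ^ 2 * |x| ^ m ≤
          π ^ 2 / ε ^ 2 * (((h x) ^ 2)⁻¹ - ((h 0) ^ 2)⁻¹) +
            (π ^ 2 / 3 + 1 / 4) * (deriv h x) ^ 2 / (h x) ^ 2) := by
  have h0mem : (0 : ℝ) ∈ Icc (-a) b := ⟨by linarith, hb.le⟩
  have hM0 : 0 < h 0 := hpos 0 h0mem
  have hπ : (0 : ℝ) < π := Real.pi_pos
  set M := h 0 with hMdef
  -- δ : threshold between near and far regions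
  set δ : ℝ := min (min η b) (min (cp / (2 * K)) (cm / (2 * K))) with hδdef
  have hδ0 : 0 < δ := lt_min (lt_min hη hb) (lt_min (by positivity) (by positivity))
  have hδη : δ ≤ η := (min_le_left _ _).trans (min_le_left _ _)
  have hδb : δ ≤ b := (min_le_left _ _).trans (min_le_right _ _)
  have hδp : δ ≤ cp / (2 * K) := (min_le_right _ _).trans (min_le_left _ _)
  have hδm : δ ≤ cm / (2 * K) := (min_le_right _ _).trans (min_le_right _ _)
  -- far region
  set S : Set ℝ := Icc (-a) b ∩ {x | δ ≤ |x|} with hSdef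
  have hScomp : IsCompact S := isCompact_Icc.inter_right
    (isClosed_le continuous_const continuous_abs)
  have hSne : S.Nonempty := ⟨b, ⟨⟨by linarith, le_rfl⟩, by
    simpa [hSdef, abs_of_pos hb] using hδb⟩⟩
  set g : ℝ → ℝ := fun x => π ^ 2 * (((h x) ^ 2)⁻¹ - (M ^ 2)⁻¹) with hgdef
  have hgcont : ContinuousOn g S := by
    apply ContinuousOn.mul continuousOn_const
    apply ContinuousOn.sub _ continuousOn_const
    exact ContinuousOn.inv₀ ((hcont.mono inter_subset_left).pow 2)
      (fun x hx => pow_ne_zero 2 (hpos x hx.1).ne')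
  obtain ⟨x₀, hx₀S, hx₀min'⟩ := hScomp.exists_isMinOn hSne hgcont
  have hx₀min : ∀ y ∈ S, g x₀ ≤ g y := fun y hy => hx₀min' hy
  have hx₀ne : x₀ ≠ 0 := by
    intro hh
    have := hx₀S.2
    rw [hh] at this
    simp only [mem_setOf_eq, abs_zero] at this
    linarith
  have hgx₀pos : 0 < g x₀ := by
    have h1 : 0 < h x₀ := hpos x₀ hx₀S.1
    have h2 : h x₀ < M := hmax x₀ hx₀S.1 hx₀ne
    have hlt : ((h 0) ^ 2)⁻¹ < ((h x₀) ^ 2)⁻¹ := by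
      apply inv_strictAnti₀ (by positivity)
      nlinarith
    have hsub : 0 < ((h x₀) ^ 2)⁻¹ - (M ^ 2)⁻¹ := sub_pos.2 hlt
    positivity
  set R : ℝ := max a b with hRdef
  have hR0 : 0 < R := lt_of_lt_of_le ha (le_max_left _ _)
  have hRm : (0:ℝ) < R ^ m := Real.rpow_pos_of_pos hR0 m
  set σ₂ : ℝ := g x₀ / R ^ m with hσ₂def
  have hσ₂pos : 0 < σ₂ := div_pos hgx₀pos hRm
  set σ := min (π ^ 2 * cp / (2 * M ^ 3)) (min (π ^ 2 * cm / (2 * M ^ 3)) σ₂) with hσdef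
  have hσpos : 0 < σ := lt_min (by positivity) (lt_min (by positivity) hσ₂pos)
  have main : ∀ x ∈ Icc (-a) b, σ * |x| ^ m ≤ π ^ 2 * (((h x) ^ 2)⁻¹ - (M ^ 2)⁻¹) := by
    intro x hx
    rcases eq_or_ne x 0 with rfl | hxne
    · simp [Real.zero_rpow (by linarith : m ≠ 0), hMdef]
    have hhx : 0 < h x := hpos x hx
    have hhxM : h x < M := hmax x hx hxne
    have habs : 0 < |x| := abs_pos.2 hxne
    have hxm : (0:ℝ) < |x| ^ m := Real.rpow_pos_of_pos habs m
    have hinv : (M - h x) / M ^ 3 ≤ ((h x) ^ 2)⁻¹ - (M ^ 2)⁻¹ :=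
      aux_inv_bound (h x) M hhx hhxM.le
    rcases le_or_gt δ |x| with hfar | hnear
    · -- far region
      have hxS : x ∈ S := ⟨hx, hfar⟩
      have hxR : |x| ≤ R := abs_le.2 ⟨by
          have h1 := hx.1; have h2 := le_max_left a b; simp only [hRdef]; linarith,
          hx.2.trans (le_max_right a b)⟩
      calc σ * |x| ^ m ≤ σ₂ * R ^ m := by
            apply mul_le_mul ((min_le_right _ _).trans (min_le_right _ _))
              (Real.rpow_le_rpow (abs_nonneg x) hxR (by linarith)) hxm.le hσ₂pos.le
        _ = g x₀ := div_mul_cancel₀ _ hRm.ne'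
        _ ≤ g x := hx₀min x hxS
    · -- near region
      have hsplit : |x| ^ (m + 1) = |x| ^ m * |x| := by
        rw [Real.rpow_add habs, Real.rpow_one]
      rcases lt_or_gt_of_ne hxne with hneg | hpos'
      · -- x < 0
        have hxη : -η ≤ x := by
          have hh : |x| < η := hnear.trans_le hδη
          rw [abs_of_neg hneg] at hh; linarith
        have hexp := (abs_le.1 (hexp_neg x hxη hneg)).2
        have hxK : K * |x| ≤ cm / 2 := by
          have hh : |x| ≤ cm / (2 * K) := le_of_lt (hnear.trans_le hδm)
          rw [le_div_iff₀ (by positivity)] at hh; nlinarith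
        have hlow : cm / 2 * |x| ^ m ≤ M - h x := by
          have h2 : K * |x| ^ (m + 1) ≤ cm / 2 * |x| ^ m := by
            rw [hsplit]
            calc K * (|x| ^ m * |x|) = (K * |x|) * |x| ^ m := by ring
              _ ≤ cm / 2 * |x| ^ m := mul_le_mul_of_nonneg_right hxK hxm.le
          nlinarith
        calc σ * |x| ^ m ≤ π ^ 2 * cm / (2 * M ^ 3) * |x| ^ m :=
              mul_le_mul_of_nonneg_right
                ((min_le_right _ _).trans (min_le_left _ _)) hxm.le
          _ = π ^ 2 * ((cm / 2 * |x| ^ m) / M ^ 3) := by ring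
          _ ≤ π ^ 2 * ((M - h x) / M ^ 3) := by gcongr
          _ ≤ π ^ 2 * (((h x) ^ 2)⁻¹ - (M ^ 2)⁻¹) :=
              mul_le_mul_of_nonneg_left hinv (by positivity)
      · -- x > 0
        have hxη : x ≤ η := by
          have hh : |x| < η := hnear.trans_le hδη
          rw [abs_of_pos hpos'] at hh; linarith
        have hexp := (abs_le.1 (hexp_pos x hpos' hxη)).2
        have hax : |x| = x := abs_of_pos hpos'
        rw [hax] at hxm hsplit ⊢
        have hxK : K * x ≤ cp / 2 := by
          have hh : |x| ≤ cp / (2 * K) := le_of_lt (hnear.trans_le hδp)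
          rw [hax, le_div_iff₀ (by positivity)] at hh; nlinarith
        have hlow : cp / 2 * x ^ m ≤ M - h x := by
          have h2 : K * x ^ (m + 1) ≤ cp / 2 * x ^ m := by
            rw [hsplit]
            calc K * (x ^ m * x) = (K * x) * x ^ m := by ring
              _ ≤ cp / 2 * x ^ m := mul_le_mul_of_nonneg_right hxK hxm.le
          nlinarith
        calc σ * x ^ m ≤ π ^ 2 * cp / (2 * M ^ 3) * x ^ m :=
              mul_le_mul_of_nonneg_right (min_le_left _ _) hxm.le
          _ = π ^ 2 * ((cp / 2 * x ^ m) / M ^ 3) := by ring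
          _ ≤ π ^ 2 * ((M - h x) / M ^ 3) := by gcongr
          _ ≤ π ^ 2 * (((h x) ^ 2)⁻¹ - (M ^ 2)⁻¹) :=
              mul_le_mul_of_nonneg_left hinv (by positivity)
  refine ⟨σ, hσpos, main, ?_⟩
  intro ε hε x hx
  have h1 := main x hx.1
  have hv : 0 ≤ (π ^ 2 / 3 + 1 / 4) * (deriv h x) ^ 2 / (h x) ^ 2 := by positivity
  have h2 : σ / ε ^ 2 * |x| ^ m ≤ π ^ 2 / ε ^ 2 * (((h x) ^ 2)⁻¹ - (M ^ 2)⁻¹) := by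
    rw [div_mul_eq_mul_div, div_mul_eq_mul_div, div_le_div_iff₀ (by positivity) (by positivity)]
    nlinarith [sq_nonneg ε]
  linarith
end

section
/- Suppose h is C¹ on all of I with h > 0, and χ ∈ C¹(I) satisfies χ(-a) = χ(b) = 0. Then for every ε > 0 the function ψ_χ(x,y) := χ(x) √(2/(ε h(x))) sin(π y/(ε h(x))) satisfies ∫_{Ω_ε} |∇ψ_χ|² dx dy = ∫_I χ'(x)² dx + ∫_I ( π²/(ε² h(x)²) + v(x) ) χ(x)² dx, where v(x) := (π²/3 + 1/4) h'(x)²/h(x)². -/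
open MeasureTheory Real Set

/-- `|∇ψ|² = (∂ₓψ)² + (∂_yψ)²` for a function `ψ : ℝ² → ℝ`. -/
noncomputable def gradSq (ψ : ℝ × ℝ → ℝ) (p : ℝ × ℝ) : ℝ :=
  (deriv (fun s => ψ (s, p.2)) p.1) ^ 2 + (deriv (fun t => ψ (p.1, t)) p.2) ^ 2


lemma sin2_hasDeriv (k y : ℝ) : HasDerivAt (fun y => Real.sin (2*(k*y))) (2*k*Real.cos (2*(k*y))) y := by
  have h1 : HasDerivAt (fun y : ℝ => 2*(k*y)) (2*k) y := by
    simpa [mul_assoc] using ((hasDerivAt_id y).const_mul (2*k))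
  have h2 := (Real.hasDerivAt_sin (2*(k*y))).comp y h1
  rw [show 2*k*Real.cos (2*(k*y)) = Real.cos (2*(k*y)) * (2*k) by ring]
  exact h2

lemma cos2_hasDeriv (k y : ℝ) : HasDerivAt (fun y => Real.cos (2*(k*y))) (-(2*k*Real.sin (2*(k*y)))) y := by
  have h1 : HasDerivAt (fun y : ℝ => 2*(k*y)) (2*k) y := by
    simpa [mul_assoc] using ((hasDerivAt_id y).const_mul (2*k))
  have h2 := (Real.hasDerivAt_cos (2*(k*y))).comp y h1
  rw [show -(2*k*Real.sin (2*(k*y))) = -Real.sin (2*(k*y)) * (2*k) by ring]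
  exact h2

noncomputable def Phi (A B C k : ℝ) : ℝ → ℝ := fun y =>
    A^2*(y/2 - Real.sin (2*(k*y))/(4*k))
    + A*B*(Real.sin (2*(k*y))/(4*k^2) - y*Real.cos (2*(k*y))/(2*k))
    + B^2*(y^3/6 + y^2*Real.sin (2*(k*y))/(4*k) + y*Real.cos (2*(k*y))/(4*k^2)
        - Real.sin (2*(k*y))/(8*k^3))
    + C^2*(y/2 + Real.sin (2*(k*y))/(4*k))

lemma Phi_hasDeriv (A B C k : ℝ) (hk : k ≠ 0) (y : ℝ) :
    HasDerivAt (Phi A B C k)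
      ((A * Real.sin (k*y) + B * y * Real.cos (k*y))^2 + C^2 * Real.cos (k*y)^2) y := by
  have h1 : HasDerivAt (fun y : ℝ => A^2*(y/2 - Real.sin (2*(k*y))/(4*k)))
      (A^2*(1/2 - (2*k*Real.cos (2*(k*y)))/(4*k))) y :=
    (((hasDerivAt_id y).div_const 2).sub ((sin2_hasDeriv k y).div_const (4*k))).const_mul _
  have h2 : HasDerivAt (fun y : ℝ => A*B*(Real.sin (2*(k*y))/(4*k^2) - y*Real.cos (2*(k*y))/(2*k)))
      (A*B*((2*k*Real.cos (2*(k*y)))/(4*k^2)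
        - (1*Real.cos (2*(k*y)) + y*(-(2*k*Real.sin (2*(k*y)))))/(2*k))) y :=
    (((sin2_hasDeriv k y).div_const (4*k^2)).sub
      (((hasDerivAt_id y).mul (cos2_hasDeriv k y)).div_const (2*k))).const_mul _
  have h3 : HasDerivAt (fun y : ℝ => B^2*(y^3/6 + y^2*Real.sin (2*(k*y))/(4*k)
        + y*Real.cos (2*(k*y))/(4*k^2) - Real.sin (2*(k*y))/(8*k^3)))
      (B^2*((3*y^2)/6 + (2*y*Real.sin (2*(k*y)) + y^2*(2*k*Real.cos (2*(k*y))))/(4*k)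
        + (1*Real.cos (2*(k*y)) + y*(-(2*k*Real.sin (2*(k*y)))))/(4*k^2)
        - (2*k*Real.cos (2*(k*y)))/(8*k^3))) y := by
    refine HasDerivAt.const_mul _ ?_
    have hy3 : HasDerivAt (fun y : ℝ => y^3/6) ((3*y^2)/6) y := by
      simpa using ((hasDerivAt_pow 3 y).div_const 6)
    have hy2s : HasDerivAt (fun y : ℝ => y^2*Real.sin (2*(k*y))/(4*k))
        ((2*y*Real.sin (2*(k*y)) + y^2*(2*k*Real.cos (2*(k*y))))/(4*k)) y := by
      have := ((hasDerivAt_pow 2 y).mul (sin2_hasDeriv k y)).div_const (4*k)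
      simpa [pow_one] using this
    have hyc : HasDerivAt (fun y : ℝ => y*Real.cos (2*(k*y))/(4*k^2))
        ((1*Real.cos (2*(k*y)) + y*(-(2*k*Real.sin (2*(k*y)))))/(4*k^2)) y :=
      ((hasDerivAt_id y).mul (cos2_hasDeriv k y)).div_const _
    exact ((hy3.add hy2s).add hyc).sub ((sin2_hasDeriv k y).div_const (8*k^3))
  have h4 : HasDerivAt (fun y : ℝ => C^2*(y/2 + Real.sin (2*(k*y))/(4*k)))
      (C^2*(1/2 + (2*k*Real.cos (2*(k*y)))/(4*k))) y :=
    (((hasDerivAt_id y).div_const 2).add ((sin2_hasDeriv k y).div_const (4*k))).const_mul _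
  have H := ((h1.add h2).add h3).add h4
  refine H.congr_deriv (Eq.symm ?_)
  rw [Real.sin_two_mul, Real.cos_two_mul]
  have hs2 : Real.sin (k*y)^2 = 1 - Real.cos (k*y)^2 := Real.sin_sq (k*y)
  linear_combination (norm := (field_simp; ring1)) A^2 * hs2

lemma key_integral (A B C L : ℝ) (hL : 0 < L) :
    ∫ y in Set.Ioo (0:ℝ) L,
      ((A * Real.sin (π * y / L) + B * y * Real.cos (π * y / L))^2
        + C^2 * Real.cos (π * y / L)^2)
      = A^2 * L / 2 - A * B * L^2 / (2 * π)
        + B^2 * (L^3/6 + L^3/(4*π^2)) + C^2 * L / 2 := by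
  have hLne : L ≠ 0 := hL.ne'
  have hkne : (π / L) ≠ 0 := div_ne_zero Real.pi_ne_zero hLne
  have harg : ∀ y : ℝ, π * y / L = (π / L) * y := by intro y; ring
  simp only [harg]
  rw [← MeasureTheory.integral_Ioc_eq_integral_Ioo,
    ← intervalIntegral.integral_of_le hL.le]
  have hcont : Continuous (fun y : ℝ =>
      (A * Real.sin ((π/L)*y) + B * y * Real.cos ((π/L)*y))^2
        + C^2 * Real.cos ((π/L)*y)^2) := by fun_prop
  rw [intervalIntegral.integral_eq_sub_of_hasDerivAt
    (fun y _ => Phi_hasDeriv A B C (π/L) hkne y) (hcont.intervalIntegrable _ _)]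
  have h2kL : 2*((π/L)*L) = 2*π := by field_simp
  unfold Phi
  rw [h2kL]
  simp only [Real.sin_two_pi, Real.cos_two_pi, mul_zero, zero_mul, mul_one]
  simp only [Real.sin_zero, Real.cos_zero]
  field_simp
  ring

lemma psi_xderiv (ε : ℝ) (χ h : ℝ → ℝ) (x y c d : ℝ)
    (hχd : HasDerivAt χ c x) (hhd : HasDerivAt h d x) (hu : 0 < ε * h x) :
    HasDerivAt (fun s => χ s * Real.sqrt (2 / (ε * h s)) * Real.sin (π * y / (ε * h s)))
      (((c - χ x * (ε*d) / (2*(ε*h x))) * Real.sqrt (2/(ε*h x))) * Real.sin (π*y/(ε*h x))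
        + (-(χ x * Real.sqrt (2/(ε*h x)) * π * (ε*d) / (ε*h x)^2)) * y
            * Real.cos (π*y/(ε*h x))) x := by
  have hune : ε * h x ≠ 0 := hu.ne'
  have hu' : HasDerivAt (fun s => ε * h s) (ε*d) x := hhd.const_mul ε
  have h2u : HasDerivAt (fun s => 2/(ε*h s)) ((0*(ε*h x) - 2*(ε*d))/(ε*h x)^2) x :=
    (hasDerivAt_const x 2).div hu' hune
  have h2upos : 0 < 2/(ε*h x) := by positivity
  have hsq : HasDerivAt (fun s => Real.sqrt (2/(ε*h s)))
      ((1/(2*Real.sqrt (2/(ε*h x)))) * ((0*(ε*h x) - 2*(ε*d))/(ε*h x)^2)) x := by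
    exact (Real.hasDerivAt_sqrt h2upos.ne').comp x h2u
  have harg : HasDerivAt (fun s => π*y/(ε*h s)) ((0*(ε*h x) - π*y*(ε*d))/(ε*h x)^2) x :=
    (hasDerivAt_const x (π*y)).div hu' hune
  have hsin : HasDerivAt (fun s => Real.sin (π*y/(ε*h s)))
      (Real.cos (π*y/(ε*h x)) * ((0*(ε*h x) - π*y*(ε*d))/(ε*h x)^2)) x :=
    (Real.hasDerivAt_sin _).comp x harg
  have H := (hχd.mul hsq).mul hsin
  refine H.congr_deriv (Eq.symm ?_)
  simp only [Pi.mul_apply]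
  have hsqrtpos : 0 < Real.sqrt (2/(ε*h x)) := Real.sqrt_pos.mpr h2upos
  have hsq2 : Real.sqrt (2/(ε*h x)) ^ 2 = 2/(ε*h x) := Real.sq_sqrt h2upos.le
  generalize hgen : Real.sqrt (2/(ε*h x)) = t
  rw [hgen] at hsq2 hsqrtpos
  rw [eq_div_iff hune] at hsq2
  have h1t : (1:ℝ)/(2*t) = t*(ε*h x)/4 := by
    rw [div_eq_div_iff (mul_ne_zero two_ne_zero hsqrtpos.ne') (by norm_num)]
    linear_combination (-2)*hsq2
  rw [h1t]
  field_simp [left_ne_zero_of_mul hune, right_ne_zero_of_mul hune]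
  ring

lemma psi_yderiv (q u y : ℝ) (hu : u ≠ 0) :
    HasDerivAt (fun t => q * Real.sin (π * t / u)) (q * (π/u) * Real.cos (π * y / u)) y := by
  have h0 : (fun t : ℝ => π * t / u) = fun t => (π/u) * t := by funext t; ring
  have h1 : HasDerivAt (fun t : ℝ => π * t / u) (π/u) y := by
    rw [h0]; simpa using (hasDerivAt_id y).const_mul (π/u)
  have h2 := ((Real.hasDerivAt_sin (π*y/u)).comp y h1).const_mul q
  refine h2.congr_deriv (Eq.symm ?_)
  ring

lemma inner_value (ε hx dh xv dx : ℝ) (hε : 0 < ε) (hh : 0 < hx) :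
    ((dx - xv*(ε*dh)/(2*(ε*hx)))*Real.sqrt (2/(ε*hx)))^2 * (ε*hx)/2
      - ((dx - xv*(ε*dh)/(2*(ε*hx)))*Real.sqrt (2/(ε*hx)))
          * (-(xv*Real.sqrt (2/(ε*hx))*π*(ε*dh)/(ε*hx)^2)) * (ε*hx)^2/(2*π)
      + (-(xv*Real.sqrt (2/(ε*hx))*π*(ε*dh)/(ε*hx)^2))^2
          * ((ε*hx)^3/6 + (ε*hx)^3/(4*π^2))
      + (xv*Real.sqrt (2/(ε*hx))*(π/(ε*hx)))^2 * (ε*hx)/2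
    = dx^2 + (π^2/(ε^2*hx^2) + (π^2/3 + 1/4)*dh^2/hx^2)*xv^2 := by
  have hu : 0 < ε * hx := by positivity
  have h2u : (0:ℝ) < 2/(ε*hx) := by positivity
  have hsq2 : Real.sqrt (2/(ε*hx)) ^ 2 = 2/(ε*hx) := Real.sq_sqrt h2u.le
  generalize hgen : Real.sqrt (2/(ε*hx)) = t
  rw [hgen] at hsq2
  ring_nf
  rw [hsq2]
  field_simp
  ring


/-- The Dirichlet-energy identity for `ψ_χ(x,y) = χ(x) √(2/(ε h(x))) sin(π y/(ε h(x)))`: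
`∫_{Ω_ε} |∇ψ_χ|² dxdy = ∫_I χ'² dx + ∫_I (π²/(ε²h²) + v) χ² dx`, where
`v = (π²/3 + 1/4) h'²/h²`. -/
theorem psi_chi_dirichlet_energy
    (a b : ℝ) (ha : 0 < a) (hb : 0 < b)
    (h : ℝ → ℝ)
    (hC1 : ContDiffOn ℝ 1 h (Icc (-a) b))
    (hpos : ∀ x ∈ Icc (-a) b, 0 < h x)
    (ε : ℝ) (hε : 0 < ε)
    (χ : ℝ → ℝ) (hχ : ContDiffOn ℝ 1 χ (Icc (-a) b))
    (hχa : χ (-a) = 0) (hχb : χ b = 0) :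
    ∫ p in {p : ℝ × ℝ | p.1 ∈ Icc (-a) b ∧ 0 < p.2 ∧ p.2 < ε * h p.1},
        gradSq (fun p : ℝ × ℝ =>
          χ p.1 * Real.sqrt (2 / (ε * h p.1)) * Real.sin (π * p.2 / (ε * h p.1))) p
      = (∫ x in Icc (-a) b, deriv χ x ^ 2) +
        ∫ x in Icc (-a) b,
          (π ^ 2 / (ε ^ 2 * (h x) ^ 2) +
            (π ^ 2 / 3 + 1 / 4) * (deriv h x) ^ 2 / (h x) ^ 2) * χ x ^ 2 := by
  have hab : (-a) ≤ b := by linarith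
  set P : ℝ → ℝ := fun x => ((projIcc (-a) b hab x : ℝ)) with hP
  have hPc : Continuous P := continuous_subtype_val.comp (continuous_projIcc)
  have hPmem : ∀ x, P x ∈ Icc (-a) b := fun x => (projIcc (-a) b hab x).2
  have hPid : ∀ x ∈ Icc (-a) b, P x = x := by
    intro x hx; simp [hP, projIcc_of_mem hab hx]
  have hUD : UniqueDiffOn ℝ (Icc (-a) b) := uniqueDiffOn_Icc (by linarith)
  set X : ℝ → ℝ := fun x => χ (P x) with hX
  set H : ℝ → ℝ := fun x => h (P x) with hH
  set DX : ℝ → ℝ := fun x => derivWithin χ (Icc (-a) b) (P x) with hDX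
  set DH : ℝ → ℝ := fun x => derivWithin h (Icc (-a) b) (P x) with hDH
  have hXc : Continuous X := hχ.continuousOn.comp_continuous hPc hPmem
  have hHc : Continuous H := hC1.continuousOn.comp_continuous hPc hPmem
  have hDXc : Continuous DX :=
    (hχ.continuousOn_derivWithin hUD le_rfl).comp_continuous hPc hPmem
  have hDHc : Continuous DH :=
    (hC1.continuousOn_derivWithin hUD le_rfl).comp_continuous hPc hPmem
  have hHpos : ∀ x, 0 < H x := fun x => hpos _ (hPmem x)
  have hupos : ∀ x : ℝ, 0 < ε * H x := fun x => mul_pos hε (hHpos x)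
  have hune : ∀ x : ℝ, ε * H x ≠ 0 := fun x => (hupos x).ne'
  -- the explicit gradient-square function
  set A : ℝ → ℝ := fun x =>
    (DX x - X x * (ε * DH x) / (2*(ε * H x))) * Real.sqrt (2/(ε * H x)) with hA
  set B : ℝ → ℝ := fun x =>
    -(X x * Real.sqrt (2/(ε * H x)) * π * (ε * DH x) / (ε * H x)^2) with hB
  set C : ℝ → ℝ := fun x => X x * Real.sqrt (2/(ε * H x)) * (π/(ε * H x)) with hC
  set F : ℝ × ℝ → ℝ := fun p =>
    (A p.1 * Real.sin (π * p.2 / (ε * H p.1))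
      + B p.1 * p.2 * Real.cos (π * p.2 / (ε * H p.1)))^2
    + (C p.1)^2 * Real.cos (π * p.2 / (ε * H p.1))^2 with hF
  set S : Set (ℝ × ℝ) := {p : ℝ × ℝ | p.1 ∈ Icc (-a) b ∧ 0 < p.2 ∧ p.2 < ε * h p.1} with hS
  have hS_eq : S = {p : ℝ × ℝ | p.1 ∈ Icc (-a) b} ∩
      ({p | 0 < p.2} ∩ {p : ℝ × ℝ | p.2 < ε * H p.1}) := by
    ext p
    simp only [hS, mem_setOf_eq, mem_inter_iff]
    constructor
    · rintro ⟨h1, h2, h3⟩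
      exact ⟨h1, h2, by simpa only [hH, hPid _ h1] using h3⟩
    · rintro ⟨h1, h2, h3⟩
      exact ⟨h1, h2, by simpa only [hH, hPid _ h1] using h3⟩
  have hSm : MeasurableSet S := by
    rw [hS_eq]
    exact ((measurableSet_Icc.preimage measurable_fst)).inter
      (((isOpen_lt continuous_const continuous_snd).inter
        (isOpen_lt continuous_snd (continuous_const.mul (hHc.comp continuous_fst)))).measurableSet)
  -- continuity of F
  have hsqc : Continuous (fun x => Real.sqrt (2/(ε * H x))) :=
    Real.continuous_sqrt.comp (continuous_const.div (continuous_const.mul hHc) hune)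
  have hAc : Continuous A := by
    apply Continuous.mul _ hsqc
    exact hDXc.sub ((hXc.mul (continuous_const.mul hDHc)).div
      (continuous_const.mul (continuous_const.mul hHc)) (fun x => by
        have := hune x; simpa using (mul_ne_zero two_ne_zero this)))
  have hBc : Continuous B := by
    apply Continuous.neg
    exact ((hXc.mul hsqc).mul continuous_const).mul (continuous_const.mul hDHc) |>.div
      ((continuous_const.mul hHc).pow 2) (fun x => pow_ne_zero _ (hune x))
  have hCc : Continuous C :=
    (hXc.mul hsqc).mul (continuous_const.div (continuous_const.mul hHc) hune)
  have hargc : Continuous (fun p : ℝ × ℝ => π * p.2 / (ε * H p.1)) :=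
    (continuous_const.mul continuous_snd).div
      ((continuous_const.mul hHc).comp continuous_fst) (fun p => hune p.1)
  have hFc : Continuous F := by
    apply Continuous.add
    · apply Continuous.pow
      exact ((hAc.comp continuous_fst).mul (Real.continuous_sin.comp hargc)).add
        (((hBc.comp continuous_fst).mul continuous_snd).mul (Real.continuous_cos.comp hargc))
    · exact (((hCc.comp continuous_fst).pow 2)).mul ((Real.continuous_cos.comp hargc).pow 2)
  -- integrability of F on S
  obtain ⟨x₀, hx₀I, hx₀⟩ := (isCompact_Icc (α := ℝ) (a := -a) (b := b)).exists_isMaxOn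
    ⟨0, by constructor <;> linarith⟩
    ((continuous_const.mul hHc).continuousOn : ContinuousOn (fun x => ε * H x) (Icc (-a) b))
  have hsub : S ⊆ Icc (-a) b ×ˢ Icc 0 (ε * H x₀) := by
    rintro p ⟨h1, h2, h3⟩
    refine ⟨h1, h2.le, ?_⟩
    have : p.2 < ε * H p.1 := by simpa only [hH, hPid _ h1] using h3
    exact this.le.trans (hx₀ h1)
  have hFint : IntegrableOn F S := by
    refine IntegrableOn.mono_set ?_ hsub
    exact (hFc.continuousOn).integrableOn_compact (isCompact_Icc.prod isCompact_Icc)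
  -- a.e. equality of gradSq with F on S
  have hNnull : volume {p : ℝ × ℝ | p.1 = -a ∨ p.1 = b} = 0 := by
    have hNe : {p : ℝ × ℝ | p.1 = -a ∨ p.1 = b} = ({-a, b} : Set ℝ) ×ˢ (univ : Set ℝ) := by
      ext p; simp [Set.mem_prod]
    rw [hNe, MeasureTheory.Measure.volume_eq_prod, MeasureTheory.Measure.prod_prod]
    rw [Set.Finite.measure_zero (Set.toFinite _) volume]
    simp
  have haeS : ∀ᵐ p ∂(volume.restrict S),
      gradSq (fun p : ℝ × ℝ =>
        χ p.1 * Real.sqrt (2 / (ε * h p.1)) * Real.sin (π * p.2 / (ε * h p.1))) p = F p := by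
    have hN : ∀ᵐ p : ℝ × ℝ, p ∉ {p : ℝ × ℝ | p.1 = -a ∨ p.1 = b} :=
      measure_eq_zero_iff_ae_notMem.mp hNnull
    filter_upwards [ae_restrict_mem hSm, ae_restrict_of_ae hN] with p hpS hpN
    obtain ⟨h1, h2, h3⟩ := hpS
    push_neg at hpN
    have hx : p.1 ∈ Ioo (-a) b :=
      ⟨lt_of_le_of_ne h1.1 (Ne.symm hpN.1), lt_of_le_of_ne h1.2 hpN.2⟩
    have hmem : Icc (-a) b ∈ nhds p.1 := Icc_mem_nhds hx.1 hx.2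
    have hhp : 0 < h p.1 := hpos _ h1
    have hu : 0 < ε * h p.1 := mul_pos hε hhp
    have eDX : DX p.1 = deriv χ p.1 := by
      simp only [hDX]; rw [hPid _ h1]; exact derivWithin_of_mem_nhds hmem
    have eDH : DH p.1 = deriv h p.1 := by
      simp only [hDH]; rw [hPid _ h1]; exact derivWithin_of_mem_nhds hmem
    have hχd : HasDerivAt χ (DX p.1) p.1 := by
      rw [eDX]; exact ((hχ.contDiffAt hmem).differentiableAt one_ne_zero).hasDerivAt
    have hhd : HasDerivAt h (DH p.1) p.1 := by
      rw [eDH]; exact ((hC1.contDiffAt hmem).differentiableAt one_ne_zero).hasDerivAt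
    have Hx := psi_xderiv ε χ h p.1 p.2 (DX p.1) (DH p.1) hχd hhd hu
    have Hy := psi_yderiv (χ p.1 * Real.sqrt (2/(ε * h p.1))) (ε * h p.1) p.2 hu.ne'
    simp only [gradSq]
    rw [Hx.deriv, Hy.deriv]
    simp only [hF, hA, hB, hC, hX, hH, hPid _ h1]
    ring
  have hind : Integrable (S.indicator F) (volume.prod volume) := by
    rw [← MeasureTheory.Measure.volume_eq_prod]
    exact hFint.integrable_indicator hSm
  have step1 : ∫ p in S, F p = ∫ x : ℝ, ∫ y : ℝ, S.indicator F (x, y) := by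
    rw [← integral_indicator hSm, MeasureTheory.Measure.volume_eq_prod,
      MeasureTheory.integral_prod _ hind]
  have step2 : ∀ x : ℝ, (∫ y : ℝ, S.indicator F (x, y))
      = (Icc (-a) b).indicator (fun x => ∫ y in Ioo 0 (ε * H x), F (x, y)) x := by
    intro x
    by_cases hx : x ∈ Icc (-a) b
    · rw [indicator_of_mem hx, ← integral_indicator measurableSet_Ioo]
      congr 1; funext y
      by_cases hy : y ∈ Ioo 0 (ε * H x)
      · rw [indicator_of_mem hy, indicator_of_mem]
        rw [hS_eq]; exact ⟨hx, hy.1, hy.2⟩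
      · rw [indicator_of_notMem hy, indicator_of_notMem]
        intro hc; rw [hS_eq] at hc; exact hy ⟨hc.2.1, hc.2.2⟩
    · rw [indicator_of_notMem hx]
      have hz : ∀ y : ℝ, S.indicator F (x, y) = 0 := by
        intro y
        apply indicator_of_notMem
        rw [hS_eq]; rintro ⟨h1, -⟩; exact hx h1
      simp only [hz, integral_zero]
  have step3 : ∫ p in S, gradSq (fun p : ℝ × ℝ =>
        χ p.1 * Real.sqrt (2 / (ε * h p.1)) * Real.sin (π * p.2 / (ε * h p.1))) p
      = ∫ x in Icc (-a) b,
          (DX x ^ 2 + (π ^ 2 / (ε ^ 2 * H x ^ 2)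
            + (π ^ 2 / 3 + 1 / 4) * DH x ^ 2 / H x ^ 2) * X x ^ 2) := by
    rw [integral_congr_ae haeS, step1]
    simp_rw [step2]
    rw [integral_indicator measurableSet_Icc]
    apply setIntegral_congr_fun measurableSet_Icc
    intro x hx
    simp only [hF]
    rw [key_integral (A x) (B x) (C x) (ε * H x) (hupos x)]
    simp only [hA, hB, hC]
    exact inner_value ε (H x) (DH x) (X x) (DX x) hε (hHpos x)
  rw [step3]
  have hint1 : IntegrableOn (fun x => DX x ^ 2) (Icc (-a) b) :=
    (hDXc.pow 2).integrableOn_Icc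
  have hint2 : IntegrableOn (fun x => (π ^ 2 / (ε ^ 2 * H x ^ 2)
      + (π ^ 2 / 3 + 1 / 4) * DH x ^ 2 / H x ^ 2) * X x ^ 2) (Icc (-a) b) := by
    apply Continuous.integrableOn_Icc
    apply Continuous.mul _ (hXc.pow 2)
    apply Continuous.add
    · exact continuous_const.div ((continuous_const.mul (hHc.pow 2)))
        (fun x => mul_ne_zero (pow_ne_zero 2 hε.ne') (pow_ne_zero 2 (hHpos x).ne'))
    · exact (continuous_const.mul (hDHc.pow 2)).div (hHc.pow 2)
        (fun x => pow_ne_zero 2 (hHpos x).ne')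
  rw [integral_add hint1 hint2]
  congr 1
  · rw [MeasureTheory.integral_Icc_eq_integral_Ioo, MeasureTheory.integral_Icc_eq_integral_Ioo]
    apply setIntegral_congr_fun measurableSet_Ioo
    intro x hx
    have hmem : Icc (-a) b ∈ nhds x := Icc_mem_nhds hx.1 hx.2
    simp only [hDX]
    rw [hPid _ (Ioo_subset_Icc_self hx), derivWithin_of_mem_nhds hmem]
  · rw [MeasureTheory.integral_Icc_eq_integral_Ioo, MeasureTheory.integral_Icc_eq_integral_Ioo]
    apply setIntegral_congr_fun measurableSet_Ioo
    intro x hx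
    have hmem : Icc (-a) b ∈ nhds x := Icc_mem_nhds hx.1 hx.2
    simp only [hDH, hH, hX]
    rw [hPid _ (Ioo_subset_Icc_self hx), derivWithin_of_mem_nhds hmem]
end

section
/- Let A and B be bounded self-adjoint operators on a complex Hilbert space H, and let c > 0, δ ≥ 0. Assume ⟨Aψ, ψ⟩ ≥ c‖ψ‖² and ⟨Bψ, ψ⟩ ≥ c‖ψ‖² for all ψ ∈ H, and |⟨(A − B)ψ₁, ψ₂⟩| ≤ δ ( ⟨Bψ₁, ψ₁⟩ · ⟨Aψ₂, ψ₂⟩ )^{1/2} for all ψ₁, ψ₂ ∈ H. Then A and B are invertible and ‖A⁻¹ − B⁻¹‖ ≤ δ/c. -/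
open MeasureTheory Real

private lemma coercive_aux {H : Type*} [NormedAddCommGroup H] [InnerProductSpace ℂ H]
    [CompleteSpace H] (A : H →L[ℂ] H) (hA : IsSelfAdjoint A) {c : ℝ} (hc : 0 < c)
    (hAc : ∀ ψ : H, c * ‖ψ‖ ^ 2 ≤ (inner ℂ (A ψ) ψ : ℂ).re) :
    IsUnit A ∧ ∀ f, ‖Ring.inverse A f‖ ≤ ‖f‖ / c := by
  have key : ∀ ψ : H, c * ‖ψ‖ ^ 2 ≤ ‖A ψ‖ * ‖ψ‖ := by
    intro ψ
    refine (hAc ψ).trans ?_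
    calc (inner ℂ (A ψ) ψ : ℂ).re ≤ ‖(inner ℂ (A ψ) ψ : ℂ)‖ :=
          Complex.re_le_norm _
      _ ≤ ‖A ψ‖ * ‖ψ‖ := norm_inner_le_norm _ _
  have hbound : ∀ ψ : H, ‖ψ‖ ≤ (⟨c⁻¹, by positivity⟩ : NNReal) * ‖A ψ‖ := by
    intro ψ
    rcases eq_or_ne ψ 0 with rfl | hne
    · simp
    · have hψ : 0 < ‖ψ‖ := norm_pos_iff.mpr hne
      have := key ψ
      show ‖ψ‖ ≤ c⁻¹ * ‖A ψ‖
      rw [le_inv_mul_iff₀ hc]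
      nlinarith [this]
  have halip := A.antilipschitz_of_bound hbound
  have hinj : Function.Injective A := halip.injective
  have hclosed : IsClosed (Set.range A) := halip.isClosed_range A.uniformContinuous
  have hclosed' : IsClosed ((LinearMap.range (A : H →ₗ[ℂ] H) : Submodule ℂ H) : Set H) := by
    simpa [LinearMap.coe_range] using hclosed
  haveI : CompleteSpace (LinearMap.range (A : H →ₗ[ℂ] H) : Submodule ℂ H) := hclosed'.completeSpace_coe
  have horth : (LinearMap.range (A : H →ₗ[ℂ] H) : Submodule ℂ H)ᗮ = ⊥ := by
    rw [Submodule.eq_bot_iff]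
    intro x hx
    have h0' : (inner ℂ (A x) x : ℂ) = 0 := hx (A x) (LinearMap.mem_range_self _ x)
    have := hAc x
    rw [h0'] at this
    simp only [Complex.zero_re] at this
    have : ‖x‖ ^ 2 ≤ 0 := by nlinarith
    have : ‖x‖ = 0 := by nlinarith [sq_nonneg ‖x‖, norm_nonneg x]
    exact norm_eq_zero.mp this
  have hrange : (LinearMap.range (A : H →ₗ[ℂ] H) : Submodule ℂ H) = ⊤ :=
    Submodule.orthogonal_eq_bot_iff.mp horth
  have hsurj : Function.Surjective A := LinearMap.range_eq_top.mp hrange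
  have hU : IsUnit A := ContinuousLinearMap.isUnit_iff_bijective.mpr ⟨hinj, hsurj⟩
  refine ⟨hU, fun f => ?_⟩
  have hid : A (Ring.inverse A f) = f := by
    have := Ring.mul_inverse_cancel A hU
    calc A (Ring.inverse A f) = (A * Ring.inverse A) f := rfl
      _ = f := by rw [this]; rfl
  have := hbound (Ring.inverse A f)
  rw [hid] at this
  rw [div_eq_inv_mul]
  exact this

/-- **Abstract resolvent comparison** (section 3 of Friedlander–Solomyak). If `A, B`
are bounded self-adjoint operators with `⟨Aψ,ψ⟩ ≥ c‖ψ‖²`, `⟨Bψ,ψ⟩ ≥ c‖ψ‖²` and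
`|⟨(A−B)ψ₁,ψ₂⟩| ≤ δ (⟨Bψ₁,ψ₁⟩⟨Aψ₂,ψ₂⟩)^{1/2}`, then `A, B` are invertible and
`‖A⁻¹ − B⁻¹‖ ≤ δ/c`. -/
theorem resolvent_difference_norm_bound
    {H : Type*} [NormedAddCommGroup H] [InnerProductSpace ℂ H] [CompleteSpace H]
    (A B : H →L[ℂ] H) (hA : IsSelfAdjoint A) (hB : IsSelfAdjoint B)
    (c δ : ℝ) (hc : 0 < c) (hδ : 0 ≤ δ)
    (hAc : ∀ ψ : H, c * ‖ψ‖ ^ 2 ≤ (inner ℂ (A ψ) ψ : ℂ).re)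
    (hBc : ∀ ψ : H, c * ‖ψ‖ ^ 2 ≤ (inner ℂ (B ψ) ψ : ℂ).re)
    (hAB : ∀ ψ₁ ψ₂ : H, ‖(inner ℂ ((A - B) ψ₁) ψ₂ : ℂ)‖ ≤
      δ * Real.sqrt ((inner ℂ (B ψ₁) ψ₁ : ℂ).re * (inner ℂ (A ψ₂) ψ₂ : ℂ).re)) :
    IsUnit A ∧ IsUnit B ∧ ‖Ring.inverse A - Ring.inverse B‖ ≤ δ / c := by
  obtain ⟨hUA, hinvA⟩ := coercive_aux A hA hc hAc
  obtain ⟨hUB, hinvB⟩ := coercive_aux B hB hc hBc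
  refine ⟨hUA, hUB, ?_⟩
  set A' := Ring.inverse A with hA'
  set B' := Ring.inverse B with hB'
  have hAA' : ∀ f, A (A' f) = f := fun f => by
    calc A (A' f) = (A * A') f := rfl
      _ = f := by rw [hA', Ring.mul_inverse_cancel A hUA]; rfl
  have hBB' : ∀ f, B (B' f) = f := fun f => by
    calc B (B' f) = (B * B') f := rfl
      _ = f := by rw [hB', Ring.mul_inverse_cancel B hUB]; rfl
  -- A' is symmetric
  have hA'sym : ∀ x y : H, (inner ℂ (A' x) y : ℂ) = inner ℂ x (A' y) := by
    intro x y
    calc (inner ℂ (A' x) y : ℂ) = inner ℂ (A' x) (A (A' y)) := by rw [hAA']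
      _ = inner ℂ (A (A' x)) (A' y) := (hA.isSymmetric _ _).symm
      _ = inner ℂ x (A' y) := by rw [hAA']
  -- key identity
  have hkey : ∀ f g : H, (inner ℂ ((A' - B') f) g : ℂ) =
      - inner ℂ ((A - B) (B' f)) (A' g) := by
    intro f g
    have h1 : (inner ℂ (A' f) g : ℂ) = inner ℂ (B (B' f)) (A' g) := by
      rw [hA'sym, hBB']
    have h2 : (inner ℂ (B' f) g : ℂ) = inner ℂ (A (B' f)) (A' g) := by
      calc (inner ℂ (B' f) g : ℂ) = inner ℂ (B' f) (A (A' g)) := by rw [hAA']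
        _ = inner ℂ (A (B' f)) (A' g) := (hA.isSymmetric _ _).symm
    simp only [ContinuousLinearMap.sub_apply, inner_sub_left, h1, h2]
    ring
  -- the bound on inner ℂ products
  have hbnd : ∀ f g : H, ‖(inner ℂ ((A' - B') f) g : ℂ)‖ ≤ δ / c * (‖f‖ * ‖g‖) := by
    intro f g
    rw [hkey, norm_neg]
    set u := B' f
    set v := A' g
    have h1 : (inner ℂ (B u) u : ℂ).re ≤ ‖f‖ * ‖f‖ / c := by
      have : B u = f := hBB' f
      rw [this]
      calc (inner ℂ f u : ℂ).re ≤ ‖(inner ℂ f u : ℂ)‖ :=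
            Complex.re_le_norm _
        _ ≤ ‖f‖ * ‖u‖ := norm_inner_le_norm _ _
        _ ≤ ‖f‖ * (‖f‖ / c) := by
            exact mul_le_mul_of_nonneg_left (hinvB f) (norm_nonneg f)
        _ = ‖f‖ * ‖f‖ / c := by ring
    have h2 : (inner ℂ (A v) v : ℂ).re ≤ ‖g‖ * ‖g‖ / c := by
      have : A v = g := hAA' g
      rw [this]
      calc (inner ℂ g v : ℂ).re ≤ ‖(inner ℂ g v : ℂ)‖ :=
            Complex.re_le_norm _
        _ ≤ ‖g‖ * ‖v‖ := norm_inner_le_norm _ _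
        _ ≤ ‖g‖ * (‖g‖ / c) := by
            exact mul_le_mul_of_nonneg_left (hinvA g) (norm_nonneg g)
        _ = ‖g‖ * ‖g‖ / c := by ring
    have hn1 : (0:ℝ) ≤ (inner ℂ (B u) u : ℂ).re := le_trans (by positivity) (hBc u)
    have hn2 : (0:ℝ) ≤ (inner ℂ (A v) v : ℂ).re := le_trans (by positivity) (hAc v)
    calc ‖(inner ℂ ((A - B) u) v : ℂ)‖
        ≤ δ * Real.sqrt ((inner ℂ (B u) u : ℂ).re * (inner ℂ (A v) v : ℂ).re) := hAB u v
      _ ≤ δ * Real.sqrt ((‖f‖ * ‖f‖ / c) * (‖g‖ * ‖g‖ / c)) := by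
          apply mul_le_mul_of_nonneg_left _ hδ
          exact Real.sqrt_le_sqrt (mul_le_mul h1 h2 hn2 (by positivity))
      _ = δ / c * (‖f‖ * ‖g‖) := by
          rw [show (‖f‖ * ‖f‖ / c) * (‖g‖ * ‖g‖ / c) = (‖f‖ * ‖g‖ / c)^2 by ring,
            Real.sqrt_sq (by positivity)]
          ring
  -- conclude
  refine ContinuousLinearMap.opNorm_le_bound _ (by positivity) fun f => ?_
  set v := (A' - B') f with hv
  rcases eq_or_ne v 0 with h0 | hne
  · rw [h0]; simp; positivity
  · have hvpos : 0 < ‖v‖ := norm_pos_iff.mpr hne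
    have := hbnd f v
    have hre : ‖v‖ * ‖v‖ ≤ ‖(inner ℂ ((A' - B') f) v : ℂ)‖ := by
      have h : (inner ℂ v v : ℂ).re = ‖v‖ * ‖v‖ := by
        rw [← RCLike.re_to_complex]; exact inner_self_eq_norm_mul_norm v
      rw [← h, ← hv]
      exact Complex.re_le_norm _
    have hfin : ‖v‖ * ‖v‖ ≤ δ / c * (‖f‖ * ‖v‖) := hre.trans this
    nlinarith [hfin, hvpos]
end

section
/- Assume additionally that v(x) := (π²/3 + 1/4) h'(x)²/h(x)² is bounded on I \ {0}. Define V_ε(t) := ε^{2α} W_ε(t ε^α) for t ∈ (-a ε^{-α}, b ε^{-α}) \ {0}. Then for every β with 0 < β(m+1) < α and every η > 0 there exists ε(η) > 0 such that |V_ε(t) − q(t)| < η for all ε < ε(η) and all t ≠ 0 with |t| ≤ ε^{-β}. -/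
open MeasureTheory Real Set

private lemma rpow_small (p c : ℝ) (hp : 0 < p) (hc : 0 < c) :
    ∃ d : ℝ, 0 < d ∧ ∀ ε : ℝ, 0 < ε → ε < d → ε ^ p < c := by
  refine ⟨c ^ p⁻¹, Real.rpow_pos_of_pos hc _, fun ε hε hεd => ?_⟩
  have h1 : ε ^ p < (c ^ p⁻¹) ^ p := Real.rpow_lt_rpow hε.le hεd hp
  rwa [← Real.rpow_mul hc.le, inv_mul_cancel₀ hp.ne', Real.rpow_one] at h1

private lemma key_est (M y d e : ℝ) (hM : 0 < M) (hy2 : M/2 ≤ y) (hyM : y ≤ M)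
    (hde : |(M - y) - d| ≤ e) (hd : 0 ≤ d) (he : 0 ≤ e) :
    |(y^2)⁻¹ - (M^2)⁻¹ - 2*d/M^3| ≤ 8*e/M^3 + 12*d*(d+e)/M^4 := by
  have hy0 : 0 < y := by linarith
  have hyne : y ≠ 0 := hy0.ne'
  have hMne : M ≠ 0 := hM.ne'
  have hid : (y^2)⁻¹ - (M^2)⁻¹ - 2*d/M^3
      = ((M - y) - d)*(M+y)/(y^2*M^2) + d*(M-y)*(M+2*y)/(y^2*M^3) := by
    field_simp
    ring
  rw [hid]
  have habs := abs_le.mp hde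
  have hDle : M - y ≤ d + e := by linarith [habs.2]
  have hD0 : 0 ≤ M - y := by linarith
  have t1 : |((M - y) - d)*(M+y)/(y^2*M^2)| ≤ 8*e/M^3 := by
    rw [abs_div, abs_mul, abs_of_pos (by positivity : (0:ℝ) < y^2*M^2),
      abs_of_pos (by linarith : (0:ℝ) < M + y), div_le_div_iff₀ (by positivity) (by positivity)]
    have hMy : (M+y)*M ≤ 8*y^2 := by nlinarith
    have h1 : |(M - y) - d| * ((M+y)*M^3) ≤ e * ((M+y)*M^3) :=
      mul_le_mul_of_nonneg_right hde (mul_nonneg (by linarith) (by positivity))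
    nlinarith [h1, mul_le_mul_of_nonneg_left hMy (mul_nonneg he (sq_nonneg M))]
  have t2 : |d*(M-y)*(M+2*y)/(y^2*M^3)| ≤ 12*d*(d+e)/M^4 := by
    have hnum : 0 ≤ d*(M-y)*(M+2*y) := by
      apply mul_nonneg (mul_nonneg hd hD0); linarith
    rw [abs_of_nonneg (div_nonneg hnum (by positivity)),
      div_le_div_iff₀ (by positivity) (by positivity)]
    have h8 : (M+2*y)*M ≤ 12*y^2 := by nlinarith
    have hmain : d*(M-y)*((M+2*y)*M) ≤ (d*(d+e))*(12*y^2) := by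
      apply mul_le_mul (mul_le_mul_of_nonneg_left hDle hd) h8 (by nlinarith) (by positivity)
    nlinarith [mul_le_mul_of_nonneg_right hmain (pow_nonneg hM.le 3)]
  calc |((M - y) - d)*(M+y)/(y^2*M^2) + d*(M-y)*(M+2*y)/(y^2*M^3)|
      ≤ |((M - y) - d)*(M+y)/(y^2*M^2)| + |d*(M-y)*(M+2*y)/(y^2*M^3)| := abs_add_le _ _
    _ ≤ 8*e/M^3 + 12*d*(d+e)/M^4 := add_le_add t1 t2

private lemma R_bound (M y c cmax K u m : ℝ) (hM : 0 < M) (hy2 : M/2 ≤ y) (hyM : y ≤ M)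
    (hc : 0 < c) (hcmax : c ≤ cmax) (hK : 0 < K) (hu : 0 < u) (hu1 : u ≤ 1) (hm : 1 ≤ m)
    (hde : |(M - y) - c * u ^ m| ≤ K * u ^ (m+1)) :
    |(y^2)⁻¹ - (M^2)⁻¹ - 2*(c*u^m)/M^3| ≤ (8*K/M^3 + 12*cmax*(cmax+K)/M^4) * u^(m+1) := by
  have hum : 0 < u ^ m := Real.rpow_pos_of_pos hu m
  have hum1 : 0 < u ^ (m+1) := Real.rpow_pos_of_pos hu (m+1)
  have step1 := key_est M y (c*u^m) (K*u^(m+1)) hM hy2 hyM hde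
    (by positivity) (by positivity)
  refine step1.trans ?_
  have h1 : u^m * u^m ≤ u^(m+1) := by
    rw [← Real.rpow_add hu]
    exact Real.rpow_le_rpow_of_exponent_ge hu hu1 (by linarith)
  have h2 : u^m * u^(m+1) ≤ u^(m+1) := by
    rw [← Real.rpow_add hu]
    exact Real.rpow_le_rpow_of_exponent_ge hu hu1 (by linarith)
  have hcm : 0 < cmax := lt_of_lt_of_le hc hcmax
  have key : 12*(c*u^m)*(c*u^m + K*u^(m+1)) ≤ 12*cmax*(cmax+K)*u^(m+1) := by
    nlinarith [mul_le_mul_of_nonneg_left h1 (mul_pos hc hc).le,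
      mul_le_mul_of_nonneg_left h2 (mul_pos hc hK).le,
      mul_le_mul_of_nonneg_right (mul_le_mul hcmax hcmax hc.le hcm.le) hum1.le,
      mul_le_mul_of_nonneg_right (mul_le_mul_of_nonneg_right hcmax hK.le) hum1.le]
  have hre : (8*K/M^3 + 12*cmax*(cmax+K)/M^4) * u^(m+1)
      = 8*(K*u^(m+1))/M^3 + 12*cmax*(cmax+K)*u^(m+1)/M^4 := by ring
  rw [hre]
  gcongr

set_option maxHeartbeats 1000000 in
/-- **Estimate (4.4)** (Friedlander–Solomyak). For the rescaled potential
`V_ε(t) = ε^{2α} W_ε(t ε^α)` and any `β` with `0 < β` and `β(m+1) < α`: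
for any `η > 0` there is `ε(η) > 0` so that `|V_ε(t) − q(t)| < η` for all
`ε < ε(η)` and all `t ≠ 0` with `|t| ≤ ε^{-β}`. -/
theorem rescaled_potential_uniform_convergence
    (a b : ℝ) (ha : 0 < a) (hb : 0 < b)
    (h : ℝ → ℝ)
    (hcont : ContinuousOn h (Icc (-a) b))
    (hpos : ∀ x ∈ Icc (-a) b, 0 < h x)
    (hmax : ∀ x ∈ Icc (-a) b, x ≠ 0 → h x < h 0)
    (hC1 : ContDiffOn ℝ 1 h (Icc (-a) b \ {0}))
    (m cp cm K η₀ : ℝ)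
    (hm : 1 ≤ m) (hcp : 0 < cp) (hcm : 0 < cm) (hK : 0 < K) (hη₀ : 0 < η₀)
    (hexp_pos : ∀ x : ℝ, 0 < x → x ≤ η₀ →
      |h x - (h 0 - cp * x ^ m)| ≤ K * x ^ (m + 1))
    (hexp_neg : ∀ x : ℝ, -η₀ ≤ x → x < 0 →
      |h x - (h 0 - cm * |x| ^ m)| ≤ K * |x| ^ (m + 1))
    (α : ℝ) (hα : α = 2 / (m + 2))
    (Cv : ℝ)
    (hv : ∀ x ∈ Icc (-a) b \ {(0 : ℝ)},
      (π ^ 2 / 3 + 1 / 4) * (deriv h x) ^ 2 / (h x) ^ 2 ≤ Cv)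
    (q : ℝ → ℝ)
    (hq_pos : ∀ t : ℝ, 0 < t → q t = 2 * π ^ 2 * cp * t ^ m / (h 0) ^ 3)
    (hq_neg : ∀ t : ℝ, t ≤ 0 → q t = 2 * π ^ 2 * cm * |t| ^ m / (h 0) ^ 3)
    (β : ℝ) (hβ : 0 < β) (hβα : β * (m + 1) < α) :
    ∀ η : ℝ, 0 < η → ∃ εη : ℝ, 0 < εη ∧ ∀ ε : ℝ, 0 < ε → ε < εη →
      ∀ t : ℝ, t ≠ 0 → |t| ≤ ε ^ (-β) →
        |ε ^ (2 * α) *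
            (π ^ 2 / ε ^ 2 * (((h (t * ε ^ α)) ^ 2)⁻¹ - ((h 0) ^ 2)⁻¹) +
              (π ^ 2 / 3 + 1 / 4) * (deriv h (t * ε ^ α)) ^ 2 / (h (t * ε ^ α)) ^ 2)
          - q t| < η := by
  intro η hη
  set M := h 0 with hM0
  have h0mem : (0:ℝ) ∈ Icc (-a) b := ⟨by linarith, hb.le⟩
  have hMpos : 0 < M := hpos 0 h0mem
  have hMne : M ≠ 0 := hMpos.ne'
  -- continuity near 0 gives a radius r
  have hcw : ContinuousWithinAt h (Icc (-a) b) 0 := hcont 0 h0mem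
  rw [Metric.continuousWithinAt_iff] at hcw
  obtain ⟨δ, hδ, hδ'⟩ := hcw (M/2) (by positivity)
  set r : ℝ := min (min (δ/2) 1) (min (min a b) η₀) with hrdef
  have hr0 : 0 < r := lt_min (lt_min (by linarith) one_pos) (lt_min (lt_min ha hb) hη₀)
  have hrδ : r < δ := lt_of_le_of_lt ((min_le_left _ _).trans (min_le_left _ _)) (by linarith)
  have hr1 : r ≤ 1 := (min_le_left _ _).trans (min_le_right _ _)
  have hra : r ≤ a := (min_le_right _ _).trans ((min_le_left _ _).trans (min_le_left _ _))
  have hrb : r ≤ b := (min_le_right _ _).trans ((min_le_left _ _).trans (min_le_right _ _))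
  have hrη : r ≤ η₀ := (min_le_right _ _).trans (min_le_right _ _)
  have hmem : ∀ x : ℝ, |x| ≤ r → x ∈ Icc (-a) b := by
    intro x hx
    have h2 := abs_le.mp hx
    exact ⟨by linarith [h2.1], by linarith [h2.2]⟩
  have hhalf : ∀ x : ℝ, |x| ≤ r → M/2 ≤ h x := by
    intro x hx
    have hd := hδ' (hmem x hx) (by rw [Real.dist_eq, sub_zero]; exact lt_of_le_of_lt hx hrδ)
    rw [Real.dist_eq] at hd
    have := abs_lt.mp hd
    linarith [this.1]
  -- constants
  set cmax := max cp cm with hcmaxdef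
  have hcmax0 : 0 < cmax := lt_of_lt_of_le hcp (le_max_left _ _)
  set C₁ := 8*K/M^3 + 12*cmax*(cmax+K)/M^4 with hC₁def
  have hC₁pos : 0 < C₁ := by positivity
  set Cv' := max Cv 0 with hCv'def
  have hCv'0 : 0 ≤ Cv' := le_max_right _ _
  -- exponent facts
  have hm2 : (0:ℝ) < m + 2 := by linarith
  have hα0 : 0 < α := by rw [hα]; positivity
  have hαval : α * (m+2) = 2 := by rw [hα]; field_simp
  have hβα' : β < α :=
    lt_of_le_of_lt (le_mul_of_one_le_right hβ.le (by linarith : (1:ℝ) ≤ m + 1)) hβα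
  have hγ0 : 0 < α - β*(m+1) := by linarith
  have hπ : (0:ℝ) < π ^ 2 := by positivity
  -- small-ε thresholds
  obtain ⟨d₁, hd₁, hd₁'⟩ := rpow_small (α - β) r (by linarith) hr0
  obtain ⟨d₂, hd₂, hd₂'⟩ := rpow_small (α - β*(m+1)) (η/(2*(π^2*C₁+1))) hγ0 (by positivity)
  obtain ⟨d₃, hd₃, hd₃'⟩ := rpow_small (2*α) (η/(2*(Cv'+1))) (by linarith) (by positivity)
  refine ⟨min d₁ (min d₂ d₃), lt_min hd₁ (lt_min hd₂ hd₃), fun ε hε hεd t ht htb => ?_⟩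
  have hε1 := hd₁' ε hε (lt_of_lt_of_le hεd (min_le_left _ _))
  have hε2 := hd₂' ε hε (lt_of_lt_of_le hεd ((min_le_right _ _).trans (min_le_left _ _)))
  have hε3 := hd₃' ε hε (lt_of_lt_of_le hεd ((min_le_right _ _).trans (min_le_right _ _)))
  have hεne : ε ≠ 0 := hε.ne'
  set x := t * ε ^ α with hxdef
  have hs : 0 < ε ^ α := Real.rpow_pos_of_pos hε α
  have hx0 : x ≠ 0 := mul_ne_zero ht hs.ne'
  have habsx : |x| = |t| * ε^α := by rw [hxdef, abs_mul, abs_of_pos hs]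
  have habsx0 : 0 < |x| := abs_pos.mpr hx0
  have hxr : |x| ≤ r := by
    rw [habsx]
    calc |t| * ε^α ≤ ε^(-β) * ε^α := mul_le_mul_of_nonneg_right htb hs.le
      _ = ε^(α-β) := by rw [← Real.rpow_add hε]; congr 1; ring
      _ ≤ r := hε1.le
  have hxmem : x ∈ Icc (-a) b := hmem x hxr
  have hyM : h x ≤ M := (hmax x hxmem hx0).le
  have hy2 : M/2 ≤ h x := hhalf x hxr
  have hx1 : |x| ≤ 1 := hxr.trans hr1
  have hxη : |x| ≤ η₀ := hxr.trans hrη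
  -- the coefficient according to the sign of t
  set c := if 0 < t then cp else cm with hcdef
  have hc0 : 0 < c := by rw [hcdef]; split_ifs <;> assumption
  have hccmax : c ≤ cmax := by
    rw [hcdef]; split_ifs
    · exact le_max_left _ _
    · exact le_max_right _ _
  have hde : |(M - h x) - c * |x| ^ m| ≤ K * |x| ^ (m+1) := by
    rcases lt_or_gt_of_ne ht with htneg | htpos
    · have hxneg : x < 0 := by rw [hxdef]; exact mul_neg_of_neg_of_pos htneg hs
      have hxabs : -η₀ ≤ x := by
        have := abs_le.mp hxη; linarith [this.1]
      have hh := hexp_neg x hxabs hxneg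
      have hcc : c = cm := by rw [hcdef, if_neg (by linarith : ¬ 0 < t)]
      rw [hcc, show (M - h x) - cm*|x|^m = -(h x - (M - cm*|x|^m)) from by ring, abs_neg]
      exact hh
    · have hxpos : 0 < x := mul_pos htpos hs
      have hxu : x ≤ η₀ := by rw [abs_of_pos hxpos] at hxη; exact hxη
      have hh := hexp_pos x hxpos hxu
      have hcc : c = cp := if_pos htpos
      rw [hcc, show (M - h x) - cp*|x|^m = -(h x - (M - cp*|x|^m)) from by ring, abs_neg,
        abs_of_pos hxpos]
      exact hh
  have hR := R_bound M (h x) c cmax K |x| m hMpos hy2 hyM hc0 hccmax hK habsx0 hx1 hm hde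
  rw [← hC₁def] at hR
  -- rpow bookkeeping
  have he2 : (ε:ℝ)^(2:ℕ) = ε^((2:ℝ)) := by
    rw [← Real.rpow_natCast ε 2]; norm_num
  have hpow : ε^(2*α) * ε^(α*m) = ε^2 := by
    rw [he2, ← Real.rpow_add hε]; congr 1; linear_combination hαval
  have hpow2 : ε^(2*α) * ε^(α*(m+1)) = ε^2 * ε^α := by
    rw [he2, ← Real.rpow_add hε, ← Real.rpow_add hε]; congr 1; linear_combination hαval
  have hxm : |x|^m = |t|^m * ε^(α*m) := by
    rw [habsx, Real.mul_rpow (abs_nonneg t) hs.le, ← Real.rpow_mul hε.le]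
  have hxm1 : |x|^(m+1) = |t|^(m+1) * ε^(α*(m+1)) := by
    rw [habsx, Real.mul_rpow (abs_nonneg t) hs.le, ← Real.rpow_mul hε.le]
  have hqc : q t = 2*π^2*c*|t|^m/M^3 := by
    rcases lt_or_gt_of_ne ht with htneg | htpos
    · rw [hq_neg t htneg.le, hcdef, if_neg (by linarith : ¬ 0 < t)]
    · rw [hq_pos t htpos, hcdef, if_pos htpos, abs_of_pos htpos]
  have hc1 : ε^(2*α) * (π^2/ε^2) * (2*(c*|x|^m)/M^3) = 2*π^2*c*|t|^m/M^3 := by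
    rw [hxm,
      show ε^(2*α) * (π^2/ε^2) * (2*(c*(|t|^m * ε^(α*m)))/M^3)
        = (2*π^2*c*|t|^m/M^3) * (ε^(2*α)*ε^(α*m)/ε^2) from by ring,
      hpow, div_self (pow_ne_zero 2 hεne), mul_one]
  have hc2 : ε^(2*α) * (π^2/ε^2) * (C₁*|x|^(m+1)) = π^2*C₁*(|t|^(m+1) * ε^α) := by
    rw [hxm1,
      show ε^(2*α) * (π^2/ε^2) * (C₁*(|t|^(m+1) * ε^(α*(m+1))))
        = (π^2*C₁*|t|^(m+1)/ε^2) * (ε^(2*α)*ε^(α*(m+1))) from by ring,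
      hpow2]
    field_simp

  -- v bound
  have hv0 : 0 ≤ (π^2/3 + 1/4) * (deriv h x)^2 / (h x)^2 := by positivity
  have hvB : |(π^2/3 + 1/4) * (deriv h x)^2 / (h x)^2| ≤ Cv' := by
    rw [abs_of_nonneg hv0]
    exact (hv x ⟨hxmem, by simpa using hx0⟩).trans (le_max_left _ _)
  -- assemble
  have hfac : 0 < ε^(2*α) * (π^2/ε^2) := by positivity
  have htm : |t|^(m+1) ≤ ε^(-(β*(m+1))) := by
    calc |t|^(m+1) ≤ (ε^(-β))^(m+1) := Real.rpow_le_rpow (abs_nonneg t) htb (by linarith)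
      _ = ε^(-(β*(m+1))) := by rw [← Real.rpow_mul hε.le]; congr 1; ring
  have hA : |ε^(2*α) * (π^2/ε^2) * (((h x)^2)⁻¹ - (M^2)⁻¹ - 2*(c*|x|^m)/M^3)|
      ≤ π^2*C₁*ε^(α - β*(m+1)) := by
    calc |ε^(2*α) * (π^2/ε^2) * (((h x)^2)⁻¹ - (M^2)⁻¹ - 2*(c*|x|^m)/M^3)|
        = ε^(2*α) * (π^2/ε^2) * |((h x)^2)⁻¹ - (M^2)⁻¹ - 2*(c*|x|^m)/M^3| := by
          rw [abs_mul, abs_of_pos hfac]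
      _ ≤ ε^(2*α) * (π^2/ε^2) * (C₁*|x|^(m+1)) := mul_le_mul_of_nonneg_left hR hfac.le
      _ = π^2*C₁*(|t|^(m+1) * ε^α) := hc2
      _ ≤ π^2*C₁*(ε^(-(β*(m+1))) * ε^α) :=
          mul_le_mul_of_nonneg_left (mul_le_mul_of_nonneg_right htm hs.le)
            (mul_pos hπ hC₁pos).le
      _ = π^2*C₁*ε^(α - β*(m+1)) := by
          rw [← Real.rpow_add hε]; congr 2; ring
  have hε2α : 0 < ε^(2*α) := Real.rpow_pos_of_pos hε _
  have hB : |ε^(2*α) * ((π^2/3 + 1/4) * (deriv h x)^2 / (h x)^2)| ≤ ε^(2*α) * Cv' := by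
    rw [abs_mul, abs_of_pos hε2α]
    exact mul_le_mul_of_nonneg_left hvB hε2α.le
  have hsplit : ε ^ (2 * α) *
        (π ^ 2 / ε ^ 2 * (((h x) ^ 2)⁻¹ - (M ^ 2)⁻¹) +
          (π ^ 2 / 3 + 1 / 4) * (deriv h x) ^ 2 / (h x) ^ 2) - q t
      = ε^(2*α) * (π^2/ε^2) * (((h x)^2)⁻¹ - (M^2)⁻¹ - 2*(c*|x|^m)/M^3)
        + ε^(2*α) * ((π^2/3 + 1/4) * (deriv h x)^2 / (h x)^2) := by
    rw [hqc, ← hc1]; ring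
  rw [hsplit]
  have hf1 : π^2*C₁*ε^(α - β*(m+1)) < η/2 := by
    have hpc : (0:ℝ) < π^2*C₁+1 := by positivity
    have hnn : 0 ≤ ε^(α - β*(m+1)) := (Real.rpow_pos_of_pos hε _).le
    calc π^2*C₁*ε^(α - β*(m+1)) ≤ (π^2*C₁+1)*ε^(α - β*(m+1)) :=
          mul_le_mul_of_nonneg_right (by linarith) hnn
      _ < (π^2*C₁+1)*(η/(2*(π^2*C₁+1))) := by
          exact mul_lt_mul_of_pos_left hε2 hpc
      _ = η/2 := by field_simp
  have hf2 : ε^(2*α) * Cv' < η/2 := by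
    have hpc : (0:ℝ) < Cv'+1 := by linarith
    calc ε^(2*α) * Cv' ≤ ε^(2*α) * (Cv'+1) :=
          mul_le_mul_of_nonneg_left (by linarith) hε2α.le
      _ < (η/(2*(Cv'+1))) * (Cv'+1) := mul_lt_mul_of_pos_right hε3 hpc
      _ = η/2 := by field_simp
  calc |ε^(2*α) * (π^2/ε^2) * (((h x)^2)⁻¹ - (M^2)⁻¹ - 2*(c*|x|^m)/M^3)
        + ε^(2*α) * ((π^2/3 + 1/4) * (deriv h x)^2 / (h x)^2)|
      ≤ |ε^(2*α) * (π^2/ε^2) * (((h x)^2)⁻¹ - (M^2)⁻¹ - 2*(c*|x|^m)/M^3)|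
        + |ε^(2*α) * ((π^2/3 + 1/4) * (deriv h x)^2 / (h x)^2)| := abs_add_le _ _
    _ ≤ π^2*C₁*ε^(α - β*(m+1)) + ε^(2*α) * Cv' := add_le_add hA hB
    _ < η/2 + η/2 := add_lt_add hf1 hf2
    _ = η := by ring
end

section
/- Let e and f be unit vectors in a complex Hilbert space H and define the operator K : H → H by Kψ := ⟨ψ, e⟩ e − ⟨ψ, f⟩ f. Then for every Hilbert (orthonormal) basis (b_i)_{i∈ι} of H one has ∑_{i∈ι} ‖K b_i‖² = 2 ( 1 − |⟨e, f⟩|² ); in other words, the squared Hilbert–Schmidt norm of K equals 2(1 − |⟨e,f⟩|²). -/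
/-- **Identity (5.2)** (Friedlander–Solomyak). For unit vectors `e, f` in a complex
Hilbert space, the squared Hilbert–Schmidt norm of the difference
`K = (·,e)e − (·,f)f` of the rank-one projections is `2(1 − |⟨e,f⟩|²)`:
for every Hilbert basis `(b_i)`, `∑_i ‖K b_i‖² = 2(1 − |⟨e,f⟩|²)`. -/
theorem hilbert_schmidt_norm_difference_rank_one_projections
    {H : Type*} [NormedAddCommGroup H] [InnerProductSpace ℂ H] [CompleteSpace H]
    (e f : H) (he : ‖e‖ = 1) (hf : ‖f‖ = 1)
    {ι : Type*} (b : HilbertBasis ι ℂ H) :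
    ∑' i : ι, ‖(inner ℂ e (b i) : ℂ) • e - (inner ℂ f (b i) : ℂ) • f‖ ^ 2
      = 2 * (1 - ‖(inner ℂ e f : ℂ)‖ ^ 2) := by
  have hee : (inner ℂ e e : ℂ) = 1 := by
    rw [inner_self_eq_norm_sq_to_K, he]; norm_num
  have hff : (inner ℂ f f : ℂ) = 1 := by
    rw [inner_self_eq_norm_sq_to_K, hf]; norm_num
  set α : ℂ := inner ℂ e f with hα
  have key : ∀ i, ‖(inner ℂ e (b i) : ℂ) • e - (inner ℂ f (b i) : ℂ) • f‖ ^ 2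
      = ((inner ℂ e (b i) * inner ℂ (b i) e + inner ℂ f (b i) * inner ℂ (b i) f
         - (inner ℂ e (b i) * inner ℂ (b i) f) * (starRingEnd ℂ α)
         - (inner ℂ f (b i) * inner ℂ (b i) e) * α : ℂ)).re := by
    intro i
    rw [← inner_self_eq_norm_sq (𝕜 := ℂ), RCLike.re_to_complex]
    congr 1
    simp only [inner_sub_left, inner_sub_right, inner_smul_left, inner_smul_right,
      hee, hff, ← inner_conj_symm (b i) e, ← inner_conj_symm (b i) f,
      ← inner_conj_symm f e, hα]
    ring
  have hA := b.hasSum_inner_mul_inner e e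
  have hB := b.hasSum_inner_mul_inner f f
  have hC := (b.hasSum_inner_mul_inner e f).mul_right (starRingEnd ℂ α)
  have hD := (b.hasSum_inner_mul_inner f e).mul_right α
  have hG := ((hA.add hB).sub hC).sub hD
  have hfe : (inner ℂ f e : ℂ) = starRingEnd ℂ α := by rw [hα, inner_conj_symm]
  rw [hee, hff, hfe, ← hα] at hG
  have hGre := Complex.reCLM.hasSum hG
  calc ∑' i : ι, ‖(inner ℂ e (b i) : ℂ) • e - (inner ℂ f (b i) : ℂ) • f‖ ^ 2
      = ∑' i : ι, ((inner ℂ e (b i) * inner ℂ (b i) e + inner ℂ f (b i) * inner ℂ (b i) f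
         - (inner ℂ e (b i) * inner ℂ (b i) f) * (starRingEnd ℂ α)
         - (inner ℂ f (b i) * inner ℂ (b i) e) * α : ℂ)).re := tsum_congr key
    _ = Complex.reCLM (1 + 1 - α * starRingEnd ℂ α - starRingEnd ℂ α * α) := hGre.tsum_eq
    _ = 2 * (1 - ‖α‖ ^ 2) := by
        rw [mul_comm (starRingEnd ℂ α) α, Complex.mul_conj]
        simp [Complex.normSq_eq_norm_sq, ← Complex.ofReal_pow]
        ring
end

section
/- Let S be a bounded self-adjoint operator on a complex Hilbert space H, let λ₀ ∈ ℝ and let e be a unit vector with S e = λ₀ e. Assume the eigenspace ker(S − λ₀) is one-dimensional and that there is an open set δ ⊆ ℝ with spectrum(S) ∩ δ = {λ₀}. Let φ : ℝ → ℝ be continuous with φ(t) = 0 for every t ∈ ℝ \ δ and φ(λ₀) = 1. Then the operator φ(S), given by the continuous functional calculus, equals the rank-one orthogonal projection ψ ↦ ⟨ψ, e⟩ e. -/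
/-- **Spectral projection via functional calculus** (section 5 of
Friedlander–Solomyak). If `λ₀` is a simple eigenvalue of the bounded self-adjoint
operator `S`, isolated in the spectrum by an open set `δ` with
`spectrum(S) ∩ δ = {λ₀}`, and `φ` is continuous, vanishes off `δ` and `φ(λ₀) = 1`,
then `φ(S)` is the rank-one projection `ψ ↦ ⟨ψ,e⟩e` onto the eigenvector `e`. -/
theorem cfc_isolated_simple_eigenvalue_projection
    {H : Type*} [NormedAddCommGroup H] [InnerProductSpace ℂ H] [CompleteSpace H]
    (S : H →L[ℂ] H) (hS : IsSelfAdjoint S)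
    (lam : ℝ) (e : H) (he : ‖e‖ = 1)
    (heig : S e = (lam : ℂ) • e)
    (hsimple :
      Module.finrank ℂ (LinearMap.ker ((S - (lam : ℂ) • (1 : H →L[ℂ] H) : H →L[ℂ] H) : H →ₗ[ℂ] H)) = 1)
    (δ : Set ℝ) (hδ : IsOpen δ)
    (hspec : spectrum ℝ S ∩ δ = {lam})
    (φ : ℝ → ℝ) (hφ : Continuous φ)
    (hφ0 : ∀ t : ℝ, t ∉ δ → φ t = 0) (hφ1 : φ lam = 1) :
    ∀ ψ : H, (cfc φ S) ψ = (inner ℂ e ψ : ℂ) • e := by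
  intro ψ
  have hlam_mem : lam ∈ spectrum ℝ S ∩ δ := by rw [hspec]; rfl
  obtain ⟨hlam_spec, hlam_δ⟩ := hlam_mem
  obtain ⟨ε, hε, hball⟩ := Metric.isOpen_iff.mp hδ lam hlam_δ
  -- φ vanishes on the spectrum away from lam
  have hφspec : ∀ t ∈ spectrum ℝ S, t ≠ lam → φ t = 0 := by
    intro t ht hne
    refine hφ0 t fun hmem => hne ?_
    have : t ∈ spectrum ℝ S ∩ δ := ⟨ht, hmem⟩
    rwa [hspec] at this
  -- a bump function equal to φ on the spectrum, identically 1 near lam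
  set φ' : ℝ → ℝ := fun t => max (1 - (2/ε) * max (|t - lam| - ε/2) 0) 0 with hφ'def
  have hφ'one : ∀ t : ℝ, |t - lam| < ε/2 → φ' t = 1 := by
    intro t ht
    have h1 : max (|t - lam| - ε/2) 0 = 0 := by
      rw [max_eq_right]; linarith
    simp [hφ'def, h1]
  have hφ'zero : ∀ t : ℝ, ε ≤ |t - lam| → φ' t = 0 := by
    intro t ht
    have h1 : max (|t - lam| - ε/2) 0 = |t - lam| - ε/2 := by
      rw [max_eq_left]; linarith
    rw [hφ'def]
    simp only []
    rw [h1, max_eq_right]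
    rw [div_mul_eq_mul_div, sub_nonpos, le_div_iff₀ hε]
    nlinarith [abs_nonneg (t - lam)]
  have hEq : (spectrum ℝ S).EqOn φ φ' := by
    intro t ht
    by_cases h : t = lam
    · subst h
      rw [hφ1, hφ'one t (by simpa using half_pos hε)]
    · have h2 : ε ≤ |t - lam| := by
        by_contra hc
        push_neg at hc
        exact h (by have : t ∈ spectrum ℝ S ∩ δ := ⟨ht, hball (by simpa [Metric.mem_ball, Real.dist_eq] using hc)⟩; rwa [hspec] at this)
      rw [hφspec t ht h, hφ'zero t h2]
  have hcongr : cfc φ S = cfc φ' S := cfc_congr hEq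
  have hφ'cont : Continuous φ' := by fun_prop
  -- the quotient function
  set h : ℝ → ℝ := fun t => (1 - φ' t) * (t - lam)⁻¹ with hhdef
  have hhcont : Continuous h := by
    rw [continuous_iff_continuousAt]
    intro t
    by_cases ht : t = lam
    · subst ht
      have hev : ∀ᶠ s in nhds t, h s = 0 := by
        filter_upwards [Metric.ball_mem_nhds t (half_pos hε)] with s hs
        rw [hhdef]
        simp only []
        rw [hφ'one s (by simpa [Real.dist_eq] using hs)]
        ring
      exact ContinuousAt.congr (continuousAt_const) (Filter.EventuallyEq.symm hev)
    · exact ((continuous_const.sub hφ'cont).continuousAt).mul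
        (((continuous_id.sub continuous_const).continuousAt).inv₀ (sub_ne_zero.mpr ht))
  have hfact : (fun t : ℝ => 1 - φ' t) = fun t => h t * (t - lam) := by
    funext t
    by_cases ht : t = lam
    · subst ht
      rw [hφ'one t (by simpa using half_pos hε)]
      simp
    · rw [hhdef]
      field_simp
  -- P e = e
  have hPe : (cfc φ S) e = e := by
    have hsub : cfc (fun t : ℝ => 1 - φ' t) S = 1 - cfc φ' S := by
      rw [cfc_sub (fun _ : ℝ => (1:ℝ)) φ' S continuousOn_const hφ'cont.continuousOn, cfc_const_one ℝ S]
    have hmul : cfc (fun t : ℝ => 1 - φ' t) S = cfc h S * cfc (fun t : ℝ => t - lam) S := by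
      rw [hfact, cfc_mul h (fun t => t - lam) S hhcont.continuousOn ((continuous_id.sub continuous_const).continuousOn)]
    have hid : cfc (fun t : ℝ => t - lam) S = S - algebraMap ℝ (H →L[ℂ] H) lam := by
      rw [cfc_sub (fun t : ℝ => t) (fun _ => lam) S continuousOn_id continuousOn_const, cfc_id' ℝ S, cfc_const lam S]
    have hker0 : (S - algebraMap ℝ (H →L[ℂ] H) lam) e = 0 := by
      simp [ContinuousLinearMap.sub_apply, heig, Algebra.algebraMap_eq_smul_one,
        ContinuousLinearMap.smul_apply, Complex.coe_smul]
    have : (1 - cfc φ' S) e = 0 := by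
      rw [← hsub, hmul, ContinuousLinearMap.mul_apply, hid, hker0, map_zero]
    have h2 : e - (cfc φ' S) e = 0 := by
      simpa [ContinuousLinearMap.sub_apply] using this
    rw [hcongr]
    have := sub_eq_zero.mp h2
    exact this.symm
  -- P is self-adjoint
  have hPsa : IsSelfAdjoint (cfc φ S) := cfc_predicate φ S
  -- S * P = lam • P
  have hSP : S * cfc φ S = lam • cfc φ S := by
    have h1 : cfc (fun t : ℝ => t * φ t) S = cfc (fun t : ℝ => lam * φ t) S := by
      refine cfc_congr fun t ht => ?_
      by_cases hne : t = lam
      · rw [hne]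
      · simp [hφspec t ht hne]
    calc S * cfc φ S = cfc (fun t : ℝ => t) S * cfc φ S := by rw [cfc_id' ℝ S]
      _ = cfc (fun t : ℝ => t * φ t) S := (cfc_mul _ _ S continuousOn_id hφ.continuousOn).symm
      _ = cfc (fun t : ℝ => lam * φ t) S := h1
      _ = lam • cfc φ S := cfc_const_mul lam φ S hφ.continuousOn
  -- e spans the kernel
  have he0 : e ≠ 0 := by
    intro h0
    rw [h0, norm_zero] at he
    exact one_ne_zero he.symm
  have heker : e ∈ LinearMap.ker ((S - (lam : ℂ) • (1 : H →L[ℂ] H) : H →L[ℂ] H) : H →ₗ[ℂ] H) := by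
    simp [LinearMap.mem_ker, ContinuousLinearMap.sub_apply, heig]
  have hfd : FiniteDimensional ℂ
      (LinearMap.ker ((S - (lam : ℂ) • (1 : H →L[ℂ] H) : H →L[ℂ] H) : H →ₗ[ℂ] H)) := by
    apply FiniteDimensional.of_finrank_pos
    rw [hsimple]; norm_num
  have hspan : Submodule.span ℂ {e} =
      LinearMap.ker ((S - (lam : ℂ) • (1 : H →L[ℂ] H) : H →L[ℂ] H) : H →ₗ[ℂ] H) := by
    apply Submodule.eq_of_le_of_finrank_le
    · rwa [Submodule.span_singleton_le_iff_mem]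
    · rw [hsimple, finrank_span_singleton he0]
  -- P ψ lands in the kernel
  have hmem : (cfc φ S) ψ ∈ LinearMap.ker ((S - (lam : ℂ) • (1 : H →L[ℂ] H) : H →L[ℂ] H) : H →ₗ[ℂ] H) := by
    rw [LinearMap.mem_ker]
    have : S ((cfc φ S) ψ) = lam • ((cfc φ S) ψ) := by
      have := congrArg (fun T : H →L[ℂ] H => T ψ) hSP
      simpa [ContinuousLinearMap.mul_apply] using this
    simp [ContinuousLinearMap.sub_apply, this, Complex.coe_smul]
  rw [← hspan, Submodule.mem_span_singleton] at hmem
  obtain ⟨c, hc⟩ := hmem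
  -- compute c
  have hinner : (inner ℂ e ((cfc φ S) ψ) : ℂ) = inner ℂ e ψ := by
    have hadj : ContinuousLinearMap.adjoint (cfc φ S) = cfc φ S := by
      rw [← ContinuousLinearMap.star_eq_adjoint]; exact hPsa
    conv_lhs => rw [← hadj]
    rw [ContinuousLinearMap.adjoint_inner_right, hPe]
  have hee : (inner ℂ e e : ℂ) = 1 := by
    rw [inner_self_eq_norm_sq_to_K, he]; norm_num
  rw [← hc] at hinner
  rw [inner_smul_right, hee, mul_one] at hinner
  rw [← hc, hinner]
end
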